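/- With the notation J = J(x,h(x)), K = K(x,h(x)), the relative error Δ(x) of the asymptotic approximation satisfies Δ(x) ≤ (1-p)[Δ(x-h(x))(K+1)F(h(x)) + Δ[h(x), x-h(x)] J] + (1-p)J + (1-p²)K - (1-p)(K+1)F̄(h(x)). -/

import Mathlib

open Filter MeasureTheory ProbabilityTheory Set

noncomputable def tail (μ : Measure ℝ) (x : ℝ) : ℝ := (μ (Set.Ioi x)).toReal

/-- Relative error of the asymptotic approximation for the geometric sum. -/
noncomputable def Delta {Ω : Type*} [MeasureSpace Ω] (S : Ω → ℝ) (p : ℝ)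
    (μ : Measure ℝ) (y : ℝ) : ℝ :=
  (ℙ {ω | y < S ω}).toReal / ((1 / p) * tail μ y) - 1

noncomputable def DeltaSup {Ω : Type*} [MeasureSpace Ω] (S : Ω → ℝ) (p : ℝ)
    (μ : Measure ℝ) (a b : ℝ) : ℝ :=
  sSup (Delta S p μ '' Set.Icc a b)

/-- Upper bound for the relative accuracy Δ(x), with J = J(x,h(x)) and
K = K(x,h(x)). -/
theorem Delta_upper_bound {Ω : Type*} [MeasureSpace Ω]
    [IsProbabilityMeasure (ℙ : Measure Ω)]
    (μ : Measure ℝ) [IsProbabilityMeasure μ]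
    (hsupp : μ (Set.Iio 0) = 0) (hunb : ∀ x, 0 < μ (Set.Ioi x))
    (X : ℕ → Ω → ℝ) (hXm : ∀ i, Measurable (X i))
    (hXd : ∀ i, Measure.map (X i) ℙ = μ)
    (hXi : iIndepFun X ℙ)
    (ν : Ω → ℕ) (hνm : Measurable ν)
    (p : ℝ) (hp0 : 0 < p) (hp1 : p < 1)
    (hgeom : ∀ k : ℕ, 1 ≤ k →
      ℙ {ω | ν ω = k} = ENNReal.ofReal (p * (1 - p) ^ (k - 1)))
    (hνX : IndepFun ν (fun ω i => X i ω) ℙ)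
    (h : ℝ → ℝ) (x : ℝ) (hh0 : 0 ≤ h x) (hh : h x ≤ x / 2) :
    Delta (fun ω => ∑ i ∈ Finset.range (ν ω), X i ω) p μ x ≤
      (1 - p) *
        (Delta (fun ω => ∑ i ∈ Finset.range (ν ω), X i ω) p μ (x - h x) *
            ((tail μ (x - h x) / tail μ x - 1) + 1) * (μ (Set.Iic (h x))).toReal +
          DeltaSup (fun ω => ∑ i ∈ Finset.range (ν ω), X i ω) p μ (h x) (x - h x) *
            ((∫ y in Set.Ioc (h x) (x - h x), tail μ (x - y) ∂μ) / tail μ x)) +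
      (1 - p) * ((∫ y in Set.Ioc (h x) (x - h x), tail μ (x - y) ∂μ) / tail μ x) +
      (1 - p ^ 2) * (tail μ (x - h x) / tail μ x - 1) -
      (1 - p) * ((tail μ (x - h x) / tail μ x - 1) + 1) * tail μ (h x) := by
  have hq0 : (0:ℝ) ≤ 1 - p := by linarith
  set q : ℝ := 1 - p with hqdef
  set S : Ω → ℝ := fun ω => ∑ i ∈ Finset.range (ν ω), X i ω with hSdef
  set Sk : ℕ → Ω → ℝ := fun k ω => ∑ i ∈ Finset.range k, X i ω with hSkdef
  have hSkm : ∀ k, Measurable (Sk k) := fun k =>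
    Finset.measurable_sum _ (fun i _ => hXm i)
  set g : ℕ → ℝ → ENNReal := fun k z => ℙ {ω | z < Sk k ω} with hgdef
  set G : ℝ → ENNReal := fun z => ℙ {ω | z < S ω} with hGdef
  -- G is antitone
  have hGant : Antitone G := by
    intro a b hab
    exact measure_mono (fun ω hω => lt_of_le_of_lt hab hω)
  have hgant : ∀ k, Antitone (g k) := by
    intro k a b hab
    exact measure_mono (fun ω hω => lt_of_le_of_lt hab hω)
  -- one-step recursion for g
  have hrec : ∀ (k : ℕ) (z : ℝ), g (k+1) z = ∫⁻ y, g k (z - y) ∂μ := by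
    intro k z
    have hindep : IndepFun (X k) (Sk k) ℙ := by
      have := (hXi.indepFun_sum_range_succ hXm k).symm
      have he : (∑ j ∈ Finset.range k, X j) = Sk k := by
        ext ω; simp [hSkdef]
      rwa [he] at this
    have hmap : Measure.map (fun ω => (X k ω, Sk k ω)) ℙ
        = μ.prod (Measure.map (Sk k) ℙ) := by
      rw [← hXd k]
      exact (indepFun_iff_map_prod_eq_prod_map_map (hXm k).aemeasurable
        (hSkm k).aemeasurable).mp hindep
    have hset : MeasurableSet {pr : ℝ × ℝ | z < pr.1 + pr.2} :=
      measurableSet_lt measurable_const (measurable_fst.add measurable_snd)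
    have h1 : g (k+1) z
        = Measure.map (fun ω => (X k ω, Sk k ω)) ℙ {pr : ℝ × ℝ | z < pr.1 + pr.2} := by
      rw [Measure.map_apply ((hXm k).prodMk (hSkm k)) hset]
      simp only [hgdef]
      congr 1
      ext ω
      simp only [hgdef, hSkdef, Set.mem_setOf_eq, Set.mem_preimage,
        Finset.sum_range_succ]
      constructor <;> intro hx <;> linarith
    rw [h1, hmap, Measure.prod_apply hset]
    refine lintegral_congr fun y => ?_
    have h2 : (Prod.mk y ⁻¹' {pr : ℝ × ℝ | z < pr.1 + pr.2}) = Set.Ioi (z - y) := by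
      ext b
      simp [sub_lt_iff_lt_add']
    rw [h2, Measure.map_apply (hSkm k) measurableSet_Ioi]
    simp only [hgdef]
    rfl
  -- g 1
  have hg1 : ∀ z, g 1 z = μ (Set.Ioi z) := by
    intro z
    rw [← hXd 0, Measure.map_apply (hXm 0) measurableSet_Ioi]
    simp only [hgdef]
    congr 1
    ext ω
    simp [hSkdef]
  -- ℙ(ν = 0) = 0
  have hq0' : (0:ℝ) ≤ q := hq0
  have hq1 : q < 1 := by simp only [hqdef]; linarith
  have hgeo : (∑' k : ℕ, ENNReal.ofReal (p * q ^ k)) = 1 := by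
    have h1 : ∀ k : ℕ, ENNReal.ofReal (p * q ^ k)
        = ENNReal.ofReal p * ENNReal.ofReal q ^ k := by
      intro k
      rw [ENNReal.ofReal_mul hp0.le, ENNReal.ofReal_pow hq0']
    simp_rw [h1]
    rw [ENNReal.tsum_mul_left, ENNReal.tsum_geometric]
    have h2 : (1 : ENNReal) - ENNReal.ofReal q = ENNReal.ofReal p := by
      rw [← ENNReal.ofReal_one, ← ENNReal.ofReal_sub _ hq0']
      congr 1
      simp [hqdef]
    rw [h2, ENNReal.mul_inv_cancel (by simp [hp0]) ENNReal.ofReal_ne_top]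
  have hνpart : (∑' k : ℕ, ℙ {ω | ν ω = k}) = 1 := by
    have hdisj : Pairwise (Function.onFun Disjoint fun k => {ω | ν ω = k}) := by
      intro i j hij
      simp only [Function.onFun, Set.disjoint_left]
      rintro ω hi hj
      exact hij (hi.symm.trans hj)
    have hmeas : ∀ k : ℕ, MeasurableSet {ω | ν ω = k} := fun k =>
      hνm (measurableSet_singleton k)
    rw [← measure_iUnion hdisj hmeas]
    have huniv : (⋃ k, {ω | ν ω = k}) = Set.univ :=
      Set.iUnion_eq_univ_iff.mpr fun ω => ⟨ν ω, rfl⟩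
    rw [huniv, measure_univ]
  have hν0 : ℙ {ω | ν ω = 0} = 0 := by
    rw [tsum_eq_zero_add' ENNReal.summable] at hνpart
    have h1 : (∑' k : ℕ, ℙ {ω | ν ω = k + 1}) = 1 := by
      rw [← hgeo]
      congr 1
      ext k
      rw [hgeom (k+1) (by omega)]
      norm_num
    rw [h1] at hνpart
    have := congrArg (fun a => a - 1) hνpart
    simpa [ENNReal.add_sub_cancel_right] using this
  -- series representation of G
  have hGsum : ∀ z, G z = ∑' k : ℕ, ENNReal.ofReal (p * q ^ k) * g (k+1) z := by
    intro z
    have hunion : {ω | z < S ω} = ⋃ k, ({ω | ν ω = k} ∩ {ω | z < Sk k ω}) := by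
      ext ω
      simp only [Set.mem_iUnion, Set.mem_inter_iff, Set.mem_setOf_eq]
      constructor
      · intro hz; exact ⟨ν ω, rfl, hz⟩
      · rintro ⟨k, hk, hz⟩
        simp only [hSdef]
        rw [hk]
        exact hz
    have hdisj : Pairwise (Function.onFun Disjoint
        fun k => ({ω | ν ω = k} ∩ {ω | z < Sk k ω})) := by
      intro i j hij
      simp only [Function.onFun, Set.disjoint_left]
      rintro ω ⟨hi, _⟩ ⟨hj, _⟩
      exact hij (hi.symm.trans hj)
    have hmeas : ∀ k : ℕ, MeasurableSet ({ω | ν ω = k} ∩ {ω | z < Sk k ω}) := fun k =>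
      (hνm (measurableSet_singleton k)).inter ((hSkm k) measurableSet_Ioi)
    have hB : ∀ k : ℕ, ℙ ({ω | ν ω = k} ∩ {ω | z < Sk k ω})
        = ℙ {ω | ν ω = k} * g k z := by
      intro k
      have hAset : MeasurableSet {f : ℕ → ℝ | z < ∑ i ∈ Finset.range k, f i} :=
        measurableSet_lt measurable_const
          (Finset.measurable_sum _ fun i _ => measurable_pi_apply i)
      have h3 := hνX.measure_inter_preimage_eq_mul (s := {k})
        (t := {f : ℕ → ℝ | z < ∑ i ∈ Finset.range k, f i})
        (measurableSet_singleton k) hAset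
      exact h3
    have hG2 : G z = ∑' k : ℕ, ℙ {ω | ν ω = k} * g k z := by
      simp only [hGdef]
      rw [hunion, measure_iUnion hdisj hmeas]
      exact tsum_congr hB
    rw [hG2, tsum_eq_zero_add' ENNReal.summable, hν0, zero_mul, zero_add]
    refine tsum_congr fun k => ?_
    rw [hgeom (k+1) (by omega)]
    norm_num
  -- renewal equation
  have hmg : ∀ k, Measurable (g k) := fun k => (hgant k).measurable
  have hmgy : ∀ k, Measurable (fun y => g k (x - y)) := fun k =>
    (hmg k).comp (measurable_const.sub measurable_id)
  have hGm : Measurable G := hGant.measurable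
  have hGmy : Measurable (fun y => G (x - y)) :=
    hGm.comp (measurable_const.sub measurable_id)
  have hren : G x = ENNReal.ofReal p * μ (Set.Ioi x) +
      ENNReal.ofReal q * ∫⁻ y, G (x - y) ∂μ := by
    have hI : ∫⁻ y, G (x - y) ∂μ
        = ∑' k : ℕ, ENNReal.ofReal (p * q ^ k) * g (k+2) x := by
      calc ∫⁻ y, G (x - y) ∂μ
          = ∫⁻ y, ∑' k : ℕ, ENNReal.ofReal (p * q ^ k) * g (k+1) (x - y) ∂μ :=
            lintegral_congr fun y => hGsum (x - y)
        _ = ∑' k : ℕ, ∫⁻ y, ENNReal.ofReal (p * q ^ k) * g (k+1) (x - y) ∂μ :=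
            lintegral_tsum fun k => ((hmgy (k+1)).const_mul _).aemeasurable
        _ = ∑' k : ℕ, ENNReal.ofReal (p * q ^ k) * ∫⁻ y, g (k+1) (x - y) ∂μ :=
            tsum_congr fun k => lintegral_const_mul _ (hmgy (k+1))
        _ = ∑' k : ℕ, ENNReal.ofReal (p * q ^ k) * g (k+2) x :=
            tsum_congr fun k => by rw [← hrec (k+1) x]
    rw [hGsum x, tsum_eq_zero_add' ENNReal.summable, hI]
    congr 1
    · rw [pow_zero, mul_one, hg1]
    · rw [← ENNReal.tsum_mul_left]
      refine tsum_congr fun k => ?_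
      rw [← mul_assoc, ← ENNReal.ofReal_mul hq0']
      congr 2
      ring
  -- real abbreviations
  set T : ℝ := tail μ x with hTdef
  set Th : ℝ := tail μ (x - h x) with hThdef
  set Bh : ℝ := tail μ (h x) with hBhdef
  set Fh : ℝ := (μ (Set.Iic (h x))).toReal with hFhdef
  set D : ℝ := DeltaSup S p μ (h x) (x - h x) with hDdef
  set c2 : ℝ := (D + 1) * (1 / p) with hc2def
  have hhle : h x ≤ x - h x := by linarith
  have htpos : ∀ z, 0 < tail μ z := fun z =>
    ENNReal.toReal_pos (hunb z).ne' (measure_ne_top μ _)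
  have hTpos : 0 < T := htpos x
  have hThpos : 0 < Th := htpos (x - h x)
  have htail_mono : ∀ a b : ℝ, a ≤ b → tail μ b ≤ tail μ a := fun a b hab =>
    ENNReal.toReal_mono (measure_ne_top μ _) (measure_mono (Set.Ioi_subset_Ioi hab))
  have hDelta_eq : ∀ z, (G z).toReal = (Delta S p μ z + 1) * ((1/p) * tail μ z) := by
    intro z
    have ht := htpos z
    have hne : (1/p) * tail μ z ≠ 0 := mul_ne_zero (by positivity) ht.ne'
    simp only [Delta, hGdef]
    rw [sub_add_cancel, div_mul_cancel₀ _ hne]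
  have hGle1 : ∀ z, G z ≤ 1 := fun z => prob_le_one
  have hGtoR1 : ∀ z, (G z).toReal ≤ 1 := by
    intro z
    have := ENNReal.toReal_mono ENNReal.one_ne_top (hGle1 z)
    simpa using this
  have hGnn : ∀ z, 0 ≤ (G z).toReal := fun z => ENNReal.toReal_nonneg
  -- DeltaSup is a true upper bound
  have hbdd : BddAbove (Delta S p μ '' Set.Icc (h x) (x - h x)) := by
    refine ⟨p / Th, ?_⟩
    rintro r ⟨w, hw, rfl⟩
    have htw := htpos w
    have hle : Th ≤ tail μ w := htail_mono _ _ hw.2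
    have h1 : Delta S p μ w + 1 = (G w).toReal / ((1/p) * tail μ w) := by
      simp [Delta, hGdef]
    have h2 : (G w).toReal / ((1/p) * tail μ w) ≤ 1 / ((1/p) * Th) :=
      div_le_div₀ zero_le_one (hGtoR1 w) (mul_pos (by positivity) hThpos)
        (mul_le_mul_of_nonneg_left hle (by positivity))
    have h3 : (1:ℝ) / ((1/p) * Th) = p / Th := by
      field_simp
    nlinarith [div_nonneg hp0.le hThpos.le]
  have hDmem : ∀ z ∈ Set.Icc (h x) (x - h x), Delta S p μ z ≤ D :=
    fun z hz => le_csSup hbdd ⟨z, hz, rfl⟩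
  have hDge : -1 ≤ D := by
    have h1 : -1 ≤ Delta S p μ (x - h x) := by
      simp only [Delta, hGdef]
      have : 0 ≤ (ℙ {ω | x - h x < S ω}).toReal / ((1/p) * tail μ (x - h x)) := by
        apply div_nonneg ENNReal.toReal_nonneg
        positivity
      linarith
    exact h1.trans (hDmem _ ⟨hhle, le_rfl⟩)
  have hc2nn : 0 ≤ c2 := by
    have h1 : (0:ℝ) ≤ D + 1 := by linarith
    rw [hc2def]
    exact mul_nonneg h1 (by positivity)
  -- measurability of y ↦ μ (Ioi (x - y))
  have hmeasμIoi : Measurable (fun y : ℝ => μ (Set.Ioi (x - y))) := by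
    have : Monotone (fun y : ℝ => μ (Set.Ioi (x - y))) := by
      intro a b hab
      exact measure_mono (Set.Ioi_subset_Ioi (by linarith))
    exact this.measurable
  set I : ENNReal := ∫⁻ y in Set.Ioc (h x) (x - h x), μ (Set.Ioi (x - y)) ∂μ with hIdef
  have hIle1 : I ≤ 1 := by
    calc I ≤ ∫⁻ _ in Set.Ioc (h x) (x - h x), 1 ∂μ := by
          refine setLIntegral_mono measurable_const fun y _ => prob_le_one
      _ = μ (Set.Ioc (h x) (x - h x)) := by rw [setLIntegral_const, one_mul]
      _ ≤ 1 := prob_le_one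
  have hIfin : I ≠ ⊤ := (lt_of_le_of_lt hIle1 ENNReal.one_lt_top).ne
  -- splitting of the integral
  have hsplit : ∫⁻ y, G (x - y) ∂μ =
      (∫⁻ y in Set.Iic (h x), G (x - y) ∂μ) +
      (∫⁻ y in Set.Ioc (h x) (x - h x), G (x - y) ∂μ) +
      (∫⁻ y in Set.Ioi (x - h x), G (x - y) ∂μ) := by
    have h1 : ∫⁻ y, G (x - y) ∂μ
        = (∫⁻ y in Set.Iic (x - h x), G (x - y) ∂μ)
          + (∫⁻ y in Set.Ioi (x - h x), G (x - y) ∂μ) := by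
      rw [← lintegral_add_compl (fun y => G (x - y)) (measurableSet_Iic (a := x - h x)),
        Set.compl_Iic]
    have h2 : ∫⁻ y in Set.Iic (x - h x), G (x - y) ∂μ
        = (∫⁻ y in Set.Iic (h x), G (x - y) ∂μ)
          + (∫⁻ y in Set.Ioc (h x) (x - h x), G (x - y) ∂μ) := by
      rw [← Set.Iic_union_Ioc_eq_Iic hhle,
        lintegral_union measurableSet_Ioc]
      rw [Set.disjoint_left]
      rintro y (hy : y ≤ h x) ⟨hy2, _⟩
      exact absurd hy (not_le.mpr hy2)
    rw [h1, h2]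
  -- piece bounds
  have hP1 : ∫⁻ y in Set.Iic (h x), G (x - y) ∂μ
      ≤ G (x - h x) * μ (Set.Iic (h x)) := by
    calc ∫⁻ y in Set.Iic (h x), G (x - y) ∂μ
        ≤ ∫⁻ _ in Set.Iic (h x), G (x - h x) ∂μ := by
          refine setLIntegral_mono measurable_const fun y hy => ?_
          exact hGant (by simp only [Set.mem_Iic] at hy; linarith)
      _ = G (x - h x) * μ (Set.Iic (h x)) := by rw [setLIntegral_const]
  have hP3 : ∫⁻ y in Set.Ioi (x - h x), G (x - y) ∂μ ≤ μ (Set.Ioi (x - h x)) := by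
    calc ∫⁻ y in Set.Ioi (x - h x), G (x - y) ∂μ
        ≤ ∫⁻ _ in Set.Ioi (x - h x), 1 ∂μ :=
          setLIntegral_mono measurable_const fun y _ => prob_le_one
      _ = μ (Set.Ioi (x - h x)) := by rw [setLIntegral_const, one_mul]
  have hP2 : ∫⁻ y in Set.Ioc (h x) (x - h x), G (x - y) ∂μ
      ≤ ENNReal.ofReal c2 * I := by
    rw [hIdef, ← lintegral_const_mul _ hmeasμIoi]
    refine setLIntegral_mono (hmeasμIoi.const_mul _) fun y hy => ?_
    simp only [Set.mem_Ioc] at hy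
    have hz : x - y ∈ Set.Icc (h x) (x - h x) := ⟨by linarith [hy.2], by linarith [hy.1]⟩
    have hDz : Delta S p μ (x - y) ≤ D := hDmem _ hz
    have htz := htpos (x - y)
    have hreal : (G (x - y)).toReal ≤ c2 * tail μ (x - y) := by
      rw [hDelta_eq (x - y)]
      have h4 : (Delta S p μ (x - y) + 1) * ((1/p) * tail μ (x - y))
          ≤ (D + 1) * ((1/p) * tail μ (x - y)) := by
        apply mul_le_mul_of_nonneg_right (by linarith) (by positivity)
      calc (Delta S p μ (x - y) + 1) * ((1/p) * tail μ (x - y))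
          ≤ (D + 1) * ((1/p) * tail μ (x - y)) := h4
        _ = c2 * tail μ (x - y) := by rw [hc2def]; ring
    calc G (x - y) = ENNReal.ofReal ((G (x - y)).toReal) :=
          (ENNReal.ofReal_toReal (measure_ne_top _ _)).symm
      _ ≤ ENNReal.ofReal (c2 * tail μ (x - y)) := ENNReal.ofReal_le_ofReal hreal
      _ = ENNReal.ofReal c2 * ENNReal.ofReal (tail μ (x - y)) := ENNReal.ofReal_mul hc2nn
      _ = ENNReal.ofReal c2 * μ (Set.Ioi (x - y)) := by
          congr 1
          simp only [tail]
          exact ENNReal.ofReal_toReal (measure_ne_top μ _)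
  -- main ENNReal bound
  have hGx_le : G x ≤ ENNReal.ofReal p * μ (Set.Ioi x) + ENNReal.ofReal q *
      (G (x - h x) * μ (Set.Iic (h x)) + ENNReal.ofReal c2 * I + μ (Set.Ioi (x - h x))) := by
    rw [hren]
    refine add_le_add le_rfl (mul_le_mul_right ?_ _)
    rw [hsplit]
    exact add_le_add (add_le_add hP1 hP2) hP3
  -- finiteness
  have hfin1 : ENNReal.ofReal p * μ (Set.Ioi x) ≠ ⊤ :=
    ENNReal.mul_ne_top ENNReal.ofReal_ne_top (measure_ne_top μ _)
  have hfinC1 : G (x - h x) * μ (Set.Iic (h x)) ≠ ⊤ :=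
    ENNReal.mul_ne_top (measure_ne_top _ _) (measure_ne_top μ _)
  have hfinC2 : ENNReal.ofReal c2 * I ≠ ⊤ :=
    ENNReal.mul_ne_top ENNReal.ofReal_ne_top hIfin
  have hfinC : G (x - h x) * μ (Set.Iic (h x)) + ENNReal.ofReal c2 * I
      + μ (Set.Ioi (x - h x)) ≠ ⊤ := by
    refine ENNReal.add_ne_top.mpr ⟨ENNReal.add_ne_top.mpr ⟨hfinC1, hfinC2⟩, measure_ne_top μ _⟩
  have hfin2 : ENNReal.ofReal q * (G (x - h x) * μ (Set.Iic (h x)) + ENNReal.ofReal c2 * I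
      + μ (Set.Ioi (x - h x))) ≠ ⊤ := ENNReal.mul_ne_top ENNReal.ofReal_ne_top hfinC
  -- real-valued main bound
  have hmain : (G x).toReal ≤ p * T + q * ((G (x - h x)).toReal * Fh + c2 * I.toReal + Th) := by
    have h5 := ENNReal.toReal_mono (ENNReal.add_ne_top.mpr ⟨hfin1, hfin2⟩) hGx_le
    rw [ENNReal.toReal_add hfin1 hfin2, ENNReal.toReal_mul, ENNReal.toReal_mul,
      ENNReal.toReal_ofReal hp0.le, ENNReal.toReal_ofReal hq0',
      ENNReal.toReal_add (ENNReal.add_ne_top.mpr ⟨hfinC1, hfinC2⟩) (measure_ne_top μ _),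
      ENNReal.toReal_add hfinC1 hfinC2, ENNReal.toReal_mul, ENNReal.toReal_mul,
      ENNReal.toReal_ofReal hc2nn] at h5
    exact h5
  -- identify I.toReal with the Bochner integral in the statement
  have hIR : I.toReal = ∫ y in Set.Ioc (h x) (x - h x), tail μ (x - y) ∂μ := by
    have h6 := MeasureTheory.integral_toReal
      (f := fun y => μ (Set.Ioi (x - y)))
      (μ := μ.restrict (Set.Ioc (h x) (x - h x)))
      (hmeasμIoi.aemeasurable.restrict)
      (ae_of_all _ fun y => measure_lt_top μ _)
    exact h6.symm
  have hDx : Delta S p μ x = (G x).toReal / ((1/p) * T) - 1 := by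
    simp only [Delta, hGdef, hTdef]
  have hDxh : (G (x - h x)).toReal = (Delta S p μ (x - h x) + 1) * ((1/p) * Th) :=
    hDelta_eq _
  have hFB : Fh + Bh = 1 := by
    have h7 : μ (Set.Iic (h x)) + μ (Set.Ioi (h x)) = 1 := by
      rw [← measure_union (Set.Iic_disjoint_Ioi le_rfl) measurableSet_Ioi,
        Set.Iic_union_Ioi, measure_univ]
    have h8 := congrArg ENNReal.toReal h7
    rw [ENNReal.toReal_add (measure_ne_top μ _) (measure_ne_top μ _),
      ENNReal.toReal_one] at h8
    exact h8
  -- final computation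
  rw [← hIR, hDx]
  have hpT : (0:ℝ) < (1/p) * T := mul_pos (by positivity) hTpos
  have hstep : (G x).toReal / ((1/p) * T)
      ≤ (p * T + q * ((G (x - h x)).toReal * Fh + c2 * I.toReal + Th)) / ((1/p) * T) :=
    (div_le_div_iff_of_pos_right hpT).mpr hmain
  refine le_trans (sub_le_sub_right hstep 1) (le_of_eq ?_)
  rw [hDxh, hc2def]
  have hFh : Fh = 1 - Bh := by linarith
  rw [hFh]
  simp only [hqdef]
  field_simp
  ring
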